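/- Let H be a real Hilbert space and A : H → H (possibly set-valued) a maximal monotone operator with A⁻¹(0) nonempty. Then for every u ∈ H, the resolvents (I + λA)⁻¹ u converge strongly, as λ → ∞, to P_F u, the metric projection of u onto the closed convex set F = A⁻¹(0). -/

import Mathlib

open scoped RealInnerProductSpace
open Filter

variable {H : Type*} [NormedAddCommGroup H] [InnerProductSpace ℝ H] [CompleteSpace H]

/-- A (possibly set-valued) operator `A : H → Set H` is monotone. -/
def IsMonotoneOp (A : H → Set H) : Prop :=
  ∀ x₁ y₁ x₂ y₂, y₁ ∈ A x₁ → y₂ ∈ A x₂ → 0 ≤ ⟪x₁ - x₂, y₁ - y₂⟫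

/-- `A` is maximal monotone: it is monotone and any pair `[x, y]` monotonically
related to the whole graph of `A` already belongs to the graph of `A`. -/
def IsMaximalMonotone (A : H → Set H) : Prop :=
  IsMonotoneOp A ∧ ∀ x y, (∀ v w, w ∈ A v → 0 ≤ ⟪v - x, w - y⟫) → y ∈ A x

/-- `J` is the resolvent `(I + βA)⁻¹` of `A`: for every `y`, `J y` satisfies
`(y - J y)/β ∈ A (J y)`, i.e. `y ∈ (I + βA)(J y)`. -/
def IsResolvent (A : H → Set H) (β : ℝ) (J : H → H) : Prop :=
  ∀ y, β⁻¹ • (y - J y) ∈ A (J y)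

/-- `p` is the metric projection of `u` onto the set `F`. -/
def IsProjection (F : Set H) (u p : H) : Prop :=
  p ∈ F ∧ ∀ q ∈ F, ‖u - p‖ ≤ ‖u - q‖

/-- Bruck–Moroşanu: the resolvents `(I + λA)⁻¹ u` converge strongly, as `λ → ∞`,
to the metric projection of `u` onto `F = A⁻¹(0)`. -/
theorem stmt_0 (A : H → Set H) (hA : IsMaximalMonotone A)
    (F : Set H) (hF : F = {x | (0 : H) ∈ A x}) (hne : F.Nonempty)
    (J : ℝ → H → H) (hJ : ∀ l : ℝ, 0 < l → IsResolvent A l (J l))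
    (u p : H) (hp : IsProjection F u p) :
    Tendsto (fun l : ℝ => J l u) atTop (nhds p) := by
  obtain ⟨mono, maxi⟩ := hA
  set x : ℝ → H := fun l => J l u with hxdef
  have hres : ∀ l : ℝ, 0 < l → l⁻¹ • (u - x l) ∈ A (x l) := fun l hl => hJ l hl u
  have hpF : p ∈ F := hp.1
  set D : ℝ := ‖u - p‖ with hD
  -- Step 1: for q ∈ F, ⟪x l - q, u - x l⟫ ≥ 0
  have key1 : ∀ l : ℝ, 0 < l → ∀ q ∈ F, 0 ≤ ⟪x l - q, u - x l⟫ := by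
    intro l hl q hq
    have h0 : (0 : H) ∈ A q := by rw [hF] at hq; exact hq
    have hm := mono (x l) (l⁻¹ • (u - x l)) q 0 (hres l hl) h0
    rw [sub_zero, real_inner_smul_right] at hm
    have hinv : (0 : ℝ) < l⁻¹ := inv_pos.mpr hl
    exact (mul_le_mul_iff_right₀ hinv).mp (by linarith)
  -- Step 2: ‖u - x l‖ ≤ ‖u - q‖ for q ∈ F
  have key2 : ∀ l : ℝ, 0 < l → ∀ q ∈ F, ‖u - x l‖ ≤ ‖u - q‖ := by
    intro l hl q hq
    have k := key1 l hl q hq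
    have e : ⟪x l - q, u - x l⟫ = ⟪u - q, u - x l⟫ - ‖u - x l‖ ^ 2 := by
      rw [show x l - q = (u - q) - (u - x l) by abel, inner_sub_left,
        real_inner_self_eq_norm_sq]
    have cs := real_inner_le_norm (u - q) (u - x l)
    rcases eq_or_lt_of_le (norm_nonneg (u - x l)) with h0 | h0
    · rw [← h0]; exact norm_nonneg _
    · have : ‖u - x l‖ * ‖u - x l‖ ≤ ‖u - q‖ * ‖u - x l‖ := by nlinarith
      exact le_of_mul_le_mul_right this h0
  -- Step 3: two-parameter monotonicity inequality
  have key3 : ∀ l μ : ℝ, 0 < μ → μ ≤ l →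
      μ * ‖u - x l‖ ^ 2 + l * ‖u - x μ‖ ^ 2 ≤ (l + μ) * ⟪u - x l, u - x μ⟫ := by
    intro l μ hμ hμl
    have hl : (0 : ℝ) < l := lt_of_lt_of_le hμ hμl
    have hm := mono (x l) (l⁻¹ • (u - x l)) (x μ) (μ⁻¹ • (u - x μ)) (hres l hl) (hres μ hμ)
    have e : ⟪x l - x μ, l⁻¹ • (u - x l) - μ⁻¹ • (u - x μ)⟫ =
        l⁻¹ * (⟪u - x l, u - x μ⟫ - ‖u - x l‖ ^ 2) +
        μ⁻¹ * (⟪u - x l, u - x μ⟫ - ‖u - x μ‖ ^ 2) := by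
      set wl : H := u - x l with hwl
      set wm : H := u - x μ with hwm
      rw [show x l - x μ = wm - wl by rw [hwl, hwm]; abel]
      rw [inner_sub_left, inner_sub_right, inner_sub_right, real_inner_smul_right,
        real_inner_smul_right, real_inner_smul_right, real_inner_smul_right,
        real_inner_self_eq_norm_sq, real_inner_self_eq_norm_sq,
        real_inner_comm wl wm]
      ring
    rw [e] at hm
    set a := ⟪u - x l, u - x μ⟫
    set A2 := ‖u - x l‖ ^ 2
    set B2 := ‖u - x μ‖ ^ 2
    have h2 : l * μ * (l⁻¹ * (a - A2) + μ⁻¹ * (a - B2)) = μ * (a - A2) + l * (a - B2) := by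
      field_simp
    have h3 : (0 : ℝ) ≤ μ * (a - A2) + l * (a - B2) := by
      rw [← h2]; exact mul_nonneg (mul_pos hl hμ).le hm
    nlinarith [h3]
  -- Step 4: l ↦ ‖u - x l‖ is nondecreasing on (0, ∞)
  have key4 : ∀ l μ : ℝ, 0 < μ → μ ≤ l → ‖u - x μ‖ ≤ ‖u - x l‖ := by
    intro l μ hμ hμl
    have hl : (0 : ℝ) < l := lt_of_lt_of_le hμ hμl
    have k3 := key3 l μ hμ hμl
    have cs := real_inner_le_norm (u - x l) (u - x μ)
    by_contra hc
    push_neg at hc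
    have hA0 : (0 : ℝ) ≤ ‖u - x l‖ := norm_nonneg _
    set A := ‖u - x l‖
    set B := ‖u - x μ‖
    have hB : (0 : ℝ) < B := lt_of_le_of_lt hA0 hc
    have h1 : (l + μ) * ⟪u - x l, u - x μ⟫ ≤ (l + μ) * (A * B) :=
      mul_le_mul_of_nonneg_left cs (by linarith)
    have hq : l * B * (B - A) ≤ μ * A * (B - A) := by nlinarith [k3, h1]
    have h5 : μ * A ≤ l * A := mul_le_mul_of_nonneg_right hμl hA0
    have h6 : l * A < l * B := (mul_lt_mul_iff_right₀ hl).mpr hc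
    have h7 : μ * A * (B - A) < l * B * (B - A) :=
      mul_lt_mul_of_pos_right (lt_of_le_of_lt h5 h6) (sub_pos.mpr hc)
    linarith
  -- Step 5: Cauchy-type bound
  have key5 : ∀ l μ : ℝ, 0 < μ → μ ≤ l →
      ‖x l - x μ‖ ^ 2 ≤ ‖u - x l‖ ^ 2 - ‖u - x μ‖ ^ 2 := by
    intro l μ hμ hμl
    have hl : (0 : ℝ) < l := lt_of_lt_of_le hμ hμl
    have k3 := key3 l μ hμ hμl
    have k4 := key4 l μ hμ hμl
    have hBA : ‖u - x μ‖ ^ 2 ≤ ‖u - x l‖ ^ 2 := by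
      have := norm_nonneg (u - x μ); nlinarith
    have hinner : ‖u - x μ‖ ^ 2 ≤ ⟪u - x l, u - x μ⟫ := by
      have hlμ : (0 : ℝ) < l + μ := by linarith
      have : (l + μ) * ‖u - x μ‖ ^ 2 ≤ (l + μ) * ⟪u - x l, u - x μ⟫ := by nlinarith
      exact le_of_mul_le_mul_left this hlμ
    have e : x l - x μ = (u - x μ) - (u - x l) := by abel
    rw [e, norm_sub_sq_real, real_inner_comm (u - x l) (u - x μ)]
    linarith
  -- Bounds: ‖u - x l‖ ≤ D
  have hbound : ∀ l : ℝ, 0 < l → ‖u - x l‖ ≤ D := fun l hl => key2 l hl p hpF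
  -- The shifted function and its limit
  set x1 : ℝ → H := fun n => x (max n 1) with hx1def
  set h1 : ℝ → ℝ := fun n => ‖u - x1 n‖ with hh1def
  have hpos : ∀ n : ℝ, (0 : ℝ) < max n 1 := fun n => lt_of_lt_of_le one_pos (le_max_right n 1)
  have hm1 : Monotone h1 := fun n m hnm =>
    key4 (max m 1) (max n 1) (hpos n) (max_le_max hnm le_rfl)
  have hbdd : BddAbove (Set.range h1) := by
    refine ⟨D, ?_⟩
    rintro y ⟨n, rfl⟩
    exact hbound (max n 1) (hpos n)
  set L : ℝ := ⨆ n, h1 n with hLdef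
  have htend1 : Tendsto h1 atTop (nhds L) := tendsto_atTop_ciSup hm1 hbdd
  have hle_L : ∀ n, h1 n ≤ L := fun n => le_ciSup hbdd n
  have hLD : L ≤ D := ciSup_le fun n => hbound (max n 1) (hpos n)
  -- x1 is a Cauchy "sequence"
  have hcauchy : CauchySeq x1 := by
    rw [Metric.cauchySeq_iff']
    intro ε hε
    have hev : ∀ᶠ N in atTop, L ^ 2 - ε ^ 2 < h1 N ^ 2 := by
      have : Tendsto (fun n => h1 n ^ 2) atTop (nhds (L ^ 2)) := htend1.pow 2
      exact this.eventually (eventually_gt_nhds (by nlinarith))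
    obtain ⟨N, hN⟩ := hev.exists
    refine ⟨N, fun n hn => ?_⟩
    have hord : max N 1 ≤ max n 1 := max_le_max hn le_rfl
    have k5 := key5 (max n 1) (max N 1) (hpos N) hord
    have hup : h1 n ≤ L := hle_L n
    have hnn : (0 : ℝ) ≤ h1 n := norm_nonneg _
    have hsq : dist (x1 n) (x1 N) ^ 2 < ε ^ 2 := by
      rw [dist_eq_norm]
      have : ‖x1 n - x1 N‖ ^ 2 ≤ h1 n ^ 2 - h1 N ^ 2 := k5
      nlinarith
    nlinarith [dist_nonneg (x := x1 n) (y := x1 N)]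
  obtain ⟨z, hz⟩ := cauchySeq_tendsto_of_complete hcauchy
  -- x tends to z
  have heq : ∀ᶠ n : ℝ in atTop, x1 n = x n := by
    filter_upwards [eventually_ge_atTop (1 : ℝ)] with n hn
    simp only [hx1def, max_eq_left hn]
  have hxz : Tendsto x atTop (nhds z) := hz.congr' heq
  have hwz : Tendsto (fun n => u - x n) atTop (nhds (u - z)) := tendsto_const_nhds.sub hxz
  -- L = ‖u - z‖
  have htendh : Tendsto (fun n => ‖u - x n‖) atTop (nhds L) := by
    apply htend1.congr' ?_
    filter_upwards [heq] with n hn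
    simp only [hh1def, hn]
  have hLz : L = ‖u - z‖ := tendsto_nhds_unique htendh hwz.norm
  -- z ∈ F
  have hzF : z ∈ F := by
    rw [hF]
    refine maxi z 0 fun v w hw => ?_
    have hy0 : Tendsto (fun l : ℝ => l⁻¹ • (u - x l)) atTop (nhds (0 : H)) := by
      have := tendsto_inv_atTop_zero.smul hwz
      rwa [zero_smul] at this
    have hti : Tendsto (fun l : ℝ => ⟪v - x l, w - l⁻¹ • (u - x l)⟫) atTop
        (nhds ⟪v - z, w - 0⟫) :=
      (tendsto_const_nhds.sub hxz).inner (tendsto_const_nhds.sub hy0)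
    refine ge_of_tendsto hti ?_
    filter_upwards [eventually_ge_atTop (1 : ℝ)] with l hl
    exact mono v w (x l) (l⁻¹ • (u - x l)) hw (hres l (by linarith))
  -- D ≤ L hence L = D
  have hDL : D ≤ L := by rw [hLz]; exact hp.2 z hzF
  have hLD' : L = D := le_antisymm hLD hDL
  -- final estimate : ‖x l - p‖² ≤ D² - ‖u - x l‖²
  have hfin : ∀ l : ℝ, 0 < l → ‖x l - p‖ ^ 2 ≤ D ^ 2 - ‖u - x l‖ ^ 2 := by
    intro l hl
    have k1 := key1 l hl p hpF
    have e : ⟪x l - p, u - x l⟫ = ⟪u - p, u - x l⟫ - ‖u - x l‖ ^ 2 := by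
      rw [show x l - p = (u - p) - (u - x l) by abel, inner_sub_left,
        real_inner_self_eq_norm_sq]
    have e2 : x l - p = (u - p) - (u - x l) := by abel
    rw [show ‖x l - p‖ ^ 2 = ‖(u - p) - (u - x l)‖ ^ 2 by rw [← e2],
      norm_sub_sq_real]
    rw [e] at k1
    rw [hD]
    linarith
  -- conclude
  rw [tendsto_iff_norm_sub_tendsto_zero]
  refine squeeze_zero' (Eventually.of_forall fun l => norm_nonneg _) ?_ ?_
    (g := fun l => Real.sqrt (D ^ 2 - ‖u - x l‖ ^ 2))
  · filter_upwards [eventually_gt_atTop (0 : ℝ)] with l hl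
    have hb := hbound l hl
    have hnn : (0 : ℝ) ≤ D ^ 2 - ‖u - x l‖ ^ 2 := by nlinarith [norm_nonneg (u - x l)]
    exact (Real.le_sqrt (norm_nonneg _) hnn).mpr (hfin l hl)
  · have : Tendsto (fun l : ℝ => D ^ 2 - ‖u - x l‖ ^ 2) atTop (nhds 0) := by
      have h2 : Tendsto (fun l : ℝ => ‖u - x l‖ ^ 2) atTop (nhds (D ^ 2)) := by
        rw [← hLD']; exact htendh.pow 2
      have := tendsto_const_nhds.sub h2 (f := fun _ : ℝ => D ^ 2)
      simpa using this
    have hs := this.sqrt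
    rwa [Real.sqrt_zero] at hs
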